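/- Let k ≥ 2 be an integer and let u, v : ℕ → (0,∞) be sequences satisfying u_{m+1} = v_m·(1+u_m)^k and v_{m+1} = 1/u_m for all m ≥ 0. Then u_m → +∞ and v_m → 0 as m → ∞ (equivalently, log u_m → +∞ and log v_m → −∞). In particular every orbit of the generator of Γ_{L_k} on the positive X-space is divergent. -/

import Mathlib

open Filter Real

/-- For `k ≥ 2`, any positive sequences satisfying
`u_{m+1} = v_m (1+u_m)^k`, `v_{m+1} = 1/u_m` satisfy `u_m → +∞` and `v_m → 0`:
every orbit of the generator of `Γ_{L_k}` on the positive X-space is divergent. -/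
theorem Lk_orbit_divergent (k : ℕ) (hk : 2 ≤ k) (u v : ℕ → ℝ)
    (hu : ∀ m, 0 < u m) (hv : ∀ m, 0 < v m)
    (hrecu : ∀ m, u (m + 1) = v m * (1 + u m) ^ k)
    (hrecv : ∀ m, v (m + 1) = 1 / u m) :
    Filter.Tendsto u Filter.atTop Filter.atTop ∧
    Filter.Tendsto v Filter.atTop (nhds 0) := by
  have hk2 : (2 : ℝ) ≤ (k : ℝ) := by exact_mod_cast hk
  -- key algebraic relation
  have hkey : ∀ m, u (m + 2) * u m = (1 + u (m + 1)) ^ k := by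
    intro m
    have h1 := hrecu (m + 1)
    rw [hrecv m] at h1
    rw [show m + 1 + 1 = m + 2 from rfl] at h1
    rw [h1]
    field_simp
    rw [mul_comm]
    exact mul_div_cancel_right₀ _ (hu m).ne'
  -- logarithms
  set c : ℕ → ℝ := fun m => Real.log (1 + u m) with hc_def
  have h1u : ∀ m, (1 : ℝ) < 1 + u m := fun m => by linarith [hu m]
  have hc : ∀ m, 0 < c m := fun m => Real.log_pos (h1u m)
  have hA : ∀ m, (k : ℝ) * c (m + 1) < c (m + 2) + c m := by
    intro m
    have h1 : (1 + u (m + 1)) ^ k < (1 + u (m + 2)) * (1 + u m) := by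
      nlinarith [hkey m, hu m, hu (m + 2)]
    have h2 : (0 : ℝ) < (1 + u (m + 1)) ^ k :=
      pow_pos (by linarith [hu (m + 1)]) k
    have h3 := Real.log_lt_log h2 h1
    rw [Real.log_mul (by linarith [hu (m + 2)]) (by linarith [hu m]),
      Real.log_pow] at h3
    exact h3
  -- differences are strictly increasing
  have hd : ∀ m, c (m + 1) - c m < c (m + 2) - c (m + 1) := by
    intro m
    have := hA m
    nlinarith [hc (m + 1)]
  -- there exists M with positive difference
  have hM : ∃ M, 0 < c (M + 1) - c M := by
    by_contra h
    push_neg at h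
    have hanti : Antitone c := antitone_nat_of_succ_le fun n => by linarith [h n]
    have hbdd : BddBelow (Set.range c) := ⟨0, by rintro x ⟨m, rfl⟩; exact (hc m).le⟩
    have hL : Tendsto c atTop (nhds (⨅ i, c i)) := tendsto_atTop_ciInf hanti hbdd
    set L := ⨅ i, c i with hLdef
    have hL0 : 0 ≤ L := le_ciInf fun i => (hc i).le
    have hue : ∀ m, u m = Real.exp (c m) - 1 := fun m => by
      rw [hc_def]; simp only []
      rw [Real.exp_log (by linarith [hu m])]; ring
    have hU : Tendsto u atTop (nhds (Real.exp L - 1)) := by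
      have h5 : Tendsto (fun m => Real.exp (c m) - 1) atTop (nhds (Real.exp L - 1)) :=
        ((Real.continuous_exp.tendsto L).comp hL).sub_const 1
      rwa [show (fun m => Real.exp (c m) - 1) = u from funext fun m => (hue m).symm] at h5
    set U := Real.exp L - 1 with hUdef
    have hU0 : 0 ≤ U := by
      have := Real.one_le_exp hL0
      simp [hUdef]; linarith
    have h2 : Tendsto (fun m => u (m + 2) * u m) atTop (nhds (U * U)) :=
      (hU.comp (tendsto_add_atTop_nat 2)).mul hU
    have h4 : Tendsto (fun m => (1 + u (m + 1)) ^ k) atTop (nhds ((1 + U) ^ k)) :=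
      (tendsto_const_nhds.add (hU.comp (tendsto_add_atTop_nat 1))).pow k
    have h3 : (fun m => u (m + 2) * u m) = fun m => (1 + u (m + 1)) ^ k :=
      funext fun m => hkey m
    rw [h3] at h2
    have heq : U * U = (1 + U) ^ k := tendsto_nhds_unique h2 h4
    have hpow : (1 + U) ^ 2 ≤ (1 + U) ^ k := pow_le_pow_right₀ (by linarith) hk
    nlinarith [hpow, heq]
  obtain ⟨M, hMpos⟩ := hM
  set ε := c (M + 1) - c M with hεdef
  -- for m ≥ M the difference is at least ε
  have hmono : ∀ m, M ≤ m → ε ≤ c (m + 1) - c m := by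
    intro m hm
    induction m, hm using Nat.le_induction with
    | base => exact le_rfl
    | succ n hn ih => linarith [hd n]
  -- linear lower bound
  have hgrow : ∀ n : ℕ, c M + n * ε ≤ c (M + n) := by
    intro n
    induction n with
    | zero => simp
    | succ n ih =>
      have h6 := hmono (M + n) (Nat.le_add_right M n)
      push_cast
      have : M + (n + 1) = (M + n) + 1 := by ring
      rw [this]
      nlinarith
  -- c tends to atTop
  have hc_top : Tendsto c atTop atTop := by
    have h5 : Tendsto (fun n : ℕ => c M + n * ε) atTop atTop :=
      tendsto_atTop_add_const_left _ _
        (Tendsto.atTop_mul_const hMpos tendsto_natCast_atTop_atTop)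
    have h6 : Tendsto (fun n => c (M + n)) atTop atTop := tendsto_atTop_mono hgrow h5
    have h7 : Tendsto (fun n => c (n + M)) atTop atTop := by
      simpa [add_comm] using h6
    exact (tendsto_add_atTop_iff_nat M).mp h7
  -- u tends to atTop
  have hu_top : Tendsto u atTop atTop := by
    have h8 : Tendsto (fun m => Real.exp (c m)) atTop atTop :=
      Real.tendsto_exp_atTop.comp hc_top
    have h9 : Tendsto (fun m => Real.exp (c m) + (-1)) atTop atTop :=
      tendsto_atTop_add_const_right _ _ h8
    have hue : ∀ m, u m = Real.exp (c m) + (-1) := fun m => by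
      rw [hc_def]; simp only []
      rw [Real.exp_log (by linarith [hu m])]; ring
    rwa [show (fun m => Real.exp (c m) + (-1)) = u from funext fun m => (hue m).symm] at h9
  refine ⟨hu_top, ?_⟩
  -- v tends to 0
  have hv1 : Tendsto (fun m => v (m + 1)) atTop (nhds 0) := by
    have : Tendsto (fun m => (u m)⁻¹) atTop (nhds 0) := hu_top.inv_tendsto_atTop
    have heq : (fun m => v (m + 1)) = fun m => (u m)⁻¹ := by
      funext m; rw [hrecv m, one_div]
    rwa [heq]
  exact (tendsto_add_atTop_iff_nat 1).mp hv1
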